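/- Let $\Gamma(z,t) = (4\pi t)^{-(m+1)/2}\exp(-|z|^2/(4t))$ be the heat kernel on $\mathbb{R}^{m+1}$ ($t>0$), and for $\varepsilon > 0$ and $y \in \mathbb{R}^{m+1}_+$ define $G^{\varepsilon}(x,y,t) = \Gamma(x-y,t) - \Gamma(x-y^*,t) - 2\int_0^{\infty} e^{-\frac{3}{4\varepsilon^2}\tau}\, D_{m+1}\Gamma(x-y^*+\tau e_{m+1}, t)\,d\tau$, where $y^*$ is the reflection of $y$ across $\{z_{m+1}=0\}$ and $e_{m+1} = (0,\dots,0,1)$. Then for every $x$ with $x_{m+1} = 0$, every $y \in \mathbb{R}^{m+1}_+$, and every $t > 0$, the oblique boundary condition $\frac{\partial G^{\varepsilon}}{\partial x_{m+1}}(x,y,t) - \frac{3}{4\varepsilon^2} G^{\varepsilon}(x,y,t) = 0$ holds. -/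

import Mathlib

noncomputable section

/-- The heat kernel `Γ(z,t) = (4πt)^{-(m+1)/2} exp(-|z|²/(4t))` on `ℝ^{m+1}`. -/
def heatK (m : ℕ) (z : EuclideanSpace ℝ (Fin (m + 1))) (t : ℝ) : ℝ :=
  1 / (4 * Real.pi * t) ^ (((m : ℝ) + 1) / 2) * Real.exp (-‖z‖ ^ 2 / (4 * t))

/-- Reflection `y ↦ y*` across the hyperplane `{z_{m+1} = 0}`. -/
def reflect {m : ℕ} (y : EuclideanSpace ℝ (Fin (m + 1))) : EuclideanSpace ℝ (Fin (m + 1)) :=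
  WithLp.toLp 2 (fun i => if i = Fin.last m then -y i else y i)

/-- `D_{m+1}Γ(z,t)`: partial derivative of the heat kernel in the `(m+1)`-st coordinate. -/
def Dlast (m : ℕ) (z : EuclideanSpace ℝ (Fin (m + 1))) (t : ℝ) : ℝ :=
  fderiv ℝ (fun w => heatK m w t) z (EuclideanSpace.single (Fin.last m) 1)

/-- The Green function
`G^ε(x,y,t) = Γ(x-y,t) - Γ(x-y*,t) - 2∫₀^∞ e^{-3τ/(4ε²)} D_{m+1}Γ(x-y*+τe_{m+1},t) dτ`. -/
def Gve (m : ℕ) (ε : ℝ) (y : EuclideanSpace ℝ (Fin (m + 1))) (t : ℝ)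
    (x : EuclideanSpace ℝ (Fin (m + 1))) : ℝ :=
  heatK m (x - y) t - heatK m (x - reflect y) t -
    2 * ∫ τ in Set.Ioi (0 : ℝ),
      Real.exp (-(3 / (4 * ε ^ 2)) * τ) *
        Dlast m (x - reflect y + τ • EuclideanSpace.single (Fin.last m) 1) t


open MeasureTheory Real Set Metric

variable {m : ℕ} {t : ℝ}

/-- derivative CLM of the heat kernel -/
def DK (m : ℕ) (t : ℝ) (z : EuclideanSpace ℝ (Fin (m + 1))) :
    EuclideanSpace ℝ (Fin (m + 1)) →L[ℝ] ℝ :=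
  (-(heatK m z t) / (2 * t)) • (innerSL ℝ z)

lemma hasFDerivAt_heatK (ht : 0 < t) (z : EuclideanSpace ℝ (Fin (m + 1))) :
    HasFDerivAt (fun w => heatK m w t) (DK m t z) z := by
  have h1 : HasFDerivAt (fun w : EuclideanSpace ℝ (Fin (m + 1)) => ‖w‖ ^ 2)
      (2 • (innerSL ℝ z)) z := by
    simpa using (hasFDerivAt_id z).norm_sq
  have h2 : HasFDerivAt (fun w : EuclideanSpace ℝ (Fin (m + 1)) => -‖w‖ ^ 2 / (4 * t))
      ((-(1) / (4 * t)) • (2 • (innerSL ℝ z))) z := by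
    have := (h1.const_mul (-(1) / (4 * t)))
    rw [show (fun w : EuclideanSpace ℝ (Fin (m + 1)) => -‖w‖ ^ 2 / (4 * t))
      = fun w => -(1) / (4 * t) * ‖w‖ ^ 2 from by funext w; ring]
    exact this
  have h3 := h2.exp
  have h4 := h3.const_mul (1 / (4 * Real.pi * t) ^ (((m : ℝ) + 1) / 2))
  refine h4.congr_fderiv ?_
  ext v
  simp only [DK, heatK, ContinuousLinearMap.coe_smul', Pi.smul_apply, smul_eq_mul]
  ring

lemma Dlast_eq (ht : 0 < t) (z : EuclideanSpace ℝ (Fin (m + 1))) :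
    Dlast m z t = -(heatK m z t) / (2 * t) * z (Fin.last m) := by
  rw [Dlast, (hasFDerivAt_heatK ht z).fderiv]
  simp [DK, EuclideanSpace.inner_single_right]

/-- second derivative CLM of the heat kernel in the last direction -/
def DDK (m : ℕ) (t : ℝ) (z : EuclideanSpace ℝ (Fin (m + 1))) :
    EuclideanSpace ℝ (Fin (m + 1)) →L[ℝ] ℝ :=
  (-(1) / (2 * t)) • (z (Fin.last m) • DK m t z +
    heatK m z t • (EuclideanSpace.proj (Fin.last m) : EuclideanSpace ℝ (Fin (m + 1)) →L[ℝ] ℝ))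

lemma hasFDerivAt_Dlast (ht : 0 < t) (z : EuclideanSpace ℝ (Fin (m + 1))) :
    HasFDerivAt (fun w => Dlast m w t) (DDK m t z) z := by
  have h1 : HasFDerivAt (fun w : EuclideanSpace ℝ (Fin (m + 1)) => w (Fin.last m))
      (EuclideanSpace.proj (Fin.last m) : EuclideanSpace ℝ (Fin (m + 1)) →L[ℝ] ℝ) z := by
    simpa using (EuclideanSpace.proj (Fin.last m) :
      EuclideanSpace ℝ (Fin (m + 1)) →L[ℝ] ℝ).hasFDerivAt (x := z)
  have h2 := ((h1.mul (hasFDerivAt_heatK ht z)).const_mul (-(1) / (2 * t)))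
  have he : (fun w : EuclideanSpace ℝ (Fin (m + 1)) =>
      -(1) / (2 * t) * (w (Fin.last m) * heatK m w t)) = fun w => Dlast m w t := by
    funext w
    rw [Dlast_eq ht w]; ring
  simp only [Pi.mul_apply] at h2
  rw [he] at h2
  exact h2

/-- second pure derivative in the last direction -/
def D2 (m : ℕ) (z : EuclideanSpace ℝ (Fin (m + 1))) (t : ℝ) : ℝ :=
  (z (Fin.last m) ^ 2 / (4 * t ^ 2) - 1 / (2 * t)) * heatK m z t

lemma DDK_apply_e (ht : 0 < t) (z : EuclideanSpace ℝ (Fin (m + 1))) :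
    DDK m t z (EuclideanSpace.single (Fin.last m) 1) = D2 m z t := by
  simp only [DDK, D2, DK, ContinuousLinearMap.coe_smul', Pi.smul_apply, smul_eq_mul,
    ContinuousLinearMap.add_apply, innerSL_apply_apply, PiLp.proj_apply]
  rw [EuclideanSpace.inner_single_right]
  simp only [EuclideanSpace.single_apply, if_pos rfl, ↓reduceIte, RCLike.star_def, conj_trivial]
  field_simp
  ring

/-- the constant in front of the heat kernel -/
def cst (m : ℕ) (t : ℝ) : ℝ := 1 / (4 * Real.pi * t) ^ (((m : ℝ) + 1) / 2)

lemma cst_pos (ht : 0 < t) : 0 < cst m t := by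
  have : (0:ℝ) < 4 * Real.pi * t := by positivity
  unfold cst
  positivity

lemma u_exp_le {u : ℝ} (hu : 0 ≤ u) : u * Real.exp (-u) ≤ 1 := by
  rw [Real.exp_neg, ← div_eq_mul_inv, div_le_one (Real.exp_pos u)]
  linarith [Real.add_one_le_exp u]

lemma sqrt_exp_le {u : ℝ} (hu : 0 ≤ u) : Real.sqrt u * Real.exp (-u) ≤ 1 := by
  have h1 : Real.sqrt u ≤ (1 + u) / 2 := by
    nlinarith [sq_nonneg (Real.sqrt u - 1), Real.sq_sqrt hu, Real.sqrt_nonneg u]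
  have h2 : Real.exp (-u) ≤ 1 := Real.exp_le_one_iff.mpr (by linarith)
  have h3 := u_exp_le hu
  nlinarith [Real.exp_pos (-u), Real.sqrt_nonneg u]

lemma aux1 (ht : 0 < t) {s : ℝ} (hs : 0 ≤ s) :
    s * Real.exp (-s ^ 2 / (4 * t)) ≤ 2 * Real.sqrt t := by
  set u : ℝ := s ^ 2 / (4 * t) with hu
  have hu0 : 0 ≤ u := by positivity
  have hs2 : s ^ 2 = 4 * t * u := by rw [hu]; field_simp
  have hss : s = 2 * Real.sqrt t * Real.sqrt u := by
    have : s = Real.sqrt (s ^ 2) := by rw [Real.sqrt_sq hs]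
    rw [this, hs2]
    rw [show (4 : ℝ) * t * u = (2*Real.sqrt t * Real.sqrt u)^2 by
      rw [mul_pow, mul_pow, Real.sq_sqrt ht.le, Real.sq_sqrt hu0]; ring,
      Real.sqrt_sq (by positivity)]
  have he : -s ^ 2 / (4 * t) = -u := by rw [hu]; ring
  rw [he, hss]
  have := sqrt_exp_le hu0
  nlinarith [Real.sqrt_nonneg t, Real.exp_pos (-u), Real.sqrt_nonneg u]

lemma aux2 (ht : 0 < t) (s : ℝ) :
    s ^ 2 * Real.exp (-s ^ 2 / (4 * t)) ≤ 4 * t := by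
  set u : ℝ := s ^ 2 / (4 * t) with hu
  have hu0 : 0 ≤ u := by positivity
  have hs2 : s ^ 2 = 4 * t * u := by rw [hu]; field_simp
  have he : -s ^ 2 / (4 * t) = -u := by rw [hu]; ring
  rw [he, hs2]
  have := u_exp_le hu0
  nlinarith [Real.exp_pos (-u)]

lemma heatK_nonneg (ht : 0 < t) (z : EuclideanSpace ℝ (Fin (m + 1))) :
    0 ≤ heatK m z t := by
  have := cst_pos (m := m) ht
  unfold heatK cst at *
  positivity

lemma heatK_le (ht : 0 < t) (z : EuclideanSpace ℝ (Fin (m + 1))) :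
    heatK m z t ≤ cst m t := by
  have hc := cst_pos (m := m) ht
  have : Real.exp (-‖z‖ ^ 2 / (4 * t)) ≤ 1 := by
    apply Real.exp_le_one_iff.mpr
    have : (0:ℝ) ≤ ‖z‖^2 / (4*t) := by positivity
    linarith [neg_div (4*t) (‖z‖^2)]
  calc heatK m z t = cst m t * Real.exp (-‖z‖ ^ 2 / (4 * t)) := rfl
    _ ≤ cst m t * 1 := by nlinarith
    _ = cst m t := mul_one _

lemma abs_coord_le (z : EuclideanSpace ℝ (Fin (m + 1))) (i : Fin (m + 1)) :
    |z i| ≤ ‖z‖ := by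
  have h := norm_inner_le_norm (𝕜 := ℝ) z (EuclideanSpace.single i (1:ℝ))
  rw [EuclideanSpace.inner_single_right, EuclideanSpace.norm_single] at h
  simpa using h

lemma abs_Dlast_le (ht : 0 < t) (z : EuclideanSpace ℝ (Fin (m + 1))) :
    |Dlast m z t| ≤ cst m t / Real.sqrt t := by
  rw [Dlast_eq ht z]
  have h1 : |(-(heatK m z t) / (2 * t)) * z (Fin.last m)|
      = heatK m z t / (2 * t) * |z (Fin.last m)| := by
    rw [abs_mul, abs_div, abs_neg, abs_of_nonneg (heatK_nonneg ht z),
      abs_of_nonneg (by positivity : (0:ℝ) ≤ 2 * t)]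
  rw [h1]
  have h2 : heatK m z t / (2 * t) * |z (Fin.last m)| ≤ heatK m z t / (2 * t) * ‖z‖ := by
    have := abs_coord_le z (Fin.last m)
    have h0 : 0 ≤ heatK m z t / (2*t) := div_nonneg (heatK_nonneg ht z) (by positivity)
    exact mul_le_mul_of_nonneg_left this h0
  refine h2.trans ?_
  have h3 : heatK m z t / (2 * t) * ‖z‖
      = cst m t / (2 * t) * (‖z‖ * Real.exp (-‖z‖ ^ 2 / (4 * t))) := by
    show cst m t * Real.exp (-‖z‖ ^ 2 / (4*t)) / (2*t) * ‖z‖ = _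
    ring
  rw [h3]
  have h4 := aux1 (ht := ht) (norm_nonneg z)
  have hc := cst_pos (m := m) ht
  have hst : Real.sqrt t > 0 := Real.sqrt_pos.mpr ht
  have h6 : Real.sqrt t * Real.sqrt t = t := Real.mul_self_sqrt ht.le
  have h5 : cst m t / (2 * t) * (2 * Real.sqrt t) = cst m t / Real.sqrt t := by
    field_simp
    nlinarith [h6]
  calc cst m t / (2 * t) * (‖z‖ * Real.exp (-‖z‖ ^ 2 / (4 * t)))
      ≤ cst m t / (2 * t) * (2 * Real.sqrt t) :=
        mul_le_mul_of_nonneg_left h4 (by positivity)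
    _ = cst m t / Real.sqrt t := h5

lemma norm_proj_le : ‖(EuclideanSpace.proj (Fin.last m) :
    EuclideanSpace ℝ (Fin (m + 1)) →L[ℝ] ℝ)‖ ≤ 1 := by
  apply ContinuousLinearMap.opNorm_le_bound _ zero_le_one
  intro z
  rw [one_mul]
  simpa using abs_coord_le z (Fin.last m)

lemma norm_DK_le (ht : 0 < t) (z : EuclideanSpace ℝ (Fin (m + 1))) :
    ‖DK m t z‖ ≤ heatK m z t / (2 * t) * ‖z‖ := by
  rw [DK]
  refine (norm_smul_le (-(heatK m z t) / (2 * t)) (innerSL ℝ z)).trans ?_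
  rw [innerSL_apply_norm]
  have : ‖-(heatK m z t) / (2 * t)‖ = heatK m z t / (2 * t) := by
    rw [Real.norm_eq_abs, abs_div, abs_neg, abs_of_nonneg (heatK_nonneg ht z),
      abs_of_nonneg (by positivity : (0:ℝ) ≤ 2 * t)]
  rw [this]

lemma norm_DDK_le (ht : 0 < t) (z : EuclideanSpace ℝ (Fin (m + 1))) :
    ‖DDK m t z‖ ≤ 3 * cst m t / (2 * t) := by
  have hc := cst_pos (m := m) ht
  have h1 : ‖DDK m t z‖ ≤ 1 / (2 * t) *
      (‖z‖ * (heatK m z t / (2 * t) * ‖z‖) + heatK m z t * 1) := by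
    rw [DDK]
    refine (norm_smul_le (-(1:ℝ) / (2 * t)) (z (Fin.last m) • DK m t z +
      heatK m z t • (EuclideanSpace.proj (Fin.last m) :
        EuclideanSpace ℝ (Fin (m + 1)) →L[ℝ] ℝ))).trans ?_
    have e1 : ‖(-(1:ℝ)) / (2 * t)‖ = 1 / (2 * t) := by
      rw [Real.norm_eq_abs, abs_div, abs_neg, abs_one,
        abs_of_nonneg (by positivity : (0:ℝ) ≤ 2 * t)]
    rw [e1]
    apply mul_le_mul_of_nonneg_left _ (by positivity)
    refine (norm_add_le _ _).trans ?_
    apply add_le_add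
    · refine (norm_smul_le (z (Fin.last m)) (DK m t z)).trans ?_
      rw [Real.norm_eq_abs]
      calc |z (Fin.last m)| * ‖DK m t z‖
          ≤ ‖z‖ * ‖DK m t z‖ := by
            exact mul_le_mul_of_nonneg_right (abs_coord_le z _) (norm_nonneg _)
        _ ≤ ‖z‖ * (heatK m z t / (2 * t) * ‖z‖) :=
            mul_le_mul_of_nonneg_left (norm_DK_le ht z) (norm_nonneg _)
    · refine (norm_smul_le (heatK m z t) (EuclideanSpace.proj (Fin.last m) :
        EuclideanSpace ℝ (Fin (m + 1)) →L[ℝ] ℝ)).trans ?_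
      rw [Real.norm_eq_abs, abs_of_nonneg (heatK_nonneg ht z)]
      exact mul_le_mul_of_nonneg_left norm_proj_le (heatK_nonneg ht z)
  refine h1.trans ?_
  have hK : heatK m z t = cst m t * Real.exp (-‖z‖ ^ 2 / (4 * t)) := rfl
  have h2 : ‖z‖ * (heatK m z t / (2 * t) * ‖z‖) ≤ cst m t / (2 * t) * (4 * t) := by
    have := aux2 (ht := ht) (s := ‖z‖)
    rw [hK]
    have hE : Real.exp (-‖z‖ ^ 2 / (4 * t)) > 0 := Real.exp_pos _
    calc ‖z‖ * (cst m t * Real.exp (-‖z‖ ^ 2 / (4 * t)) / (2 * t) * ‖z‖)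
        = cst m t / (2 * t) * (‖z‖ ^ 2 * Real.exp (-‖z‖ ^ 2 / (4 * t))) := by ring
      _ ≤ cst m t / (2 * t) * (4 * t) := mul_le_mul_of_nonneg_left this (by positivity)
  have h3 : heatK m z t * 1 ≤ cst m t := by
    rw [mul_one]; exact heatK_le ht z
  have h4 : 1 / (2 * t) * (cst m t / (2 * t) * (4 * t) + cst m t) = 3 * cst m t / (2 * t) := by
    field_simp
    ring
  calc (1 / (2 * t)) * (‖z‖ * (heatK m z t / (2 * t) * ‖z‖) + heatK m z t * 1)
      ≤ 1 / (2 * t) * (cst m t / (2 * t) * (4 * t) + cst m t) := by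
        apply mul_le_mul_of_nonneg_left (add_le_add h2 h3) (by positivity)
    _ = 3 * cst m t / (2 * t) := h4

lemma abs_D2_le (ht : 0 < t) (z : EuclideanSpace ℝ (Fin (m + 1))) :
    |D2 m z t| ≤ 3 * cst m t / (2 * t) := by
  rw [← DDK_apply_e ht z]
  calc |DDK m t z (EuclideanSpace.single (Fin.last m) 1)|
      ≤ ‖DDK m t z‖ * ‖EuclideanSpace.single (Fin.last m) (1:ℝ)‖ :=
        (DDK m t z).le_opNorm _
    _ ≤ 3 * cst m t / (2 * t) := by
        rw [EuclideanSpace.norm_single, norm_one, mul_one]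
        exact norm_DDK_le ht z

lemma continuous_heatK : Continuous (fun z : EuclideanSpace ℝ (Fin (m + 1)) => heatK m z t) := by
  unfold heatK
  fun_prop

lemma continuous_Dlast (ht : 0 < t) :
    Continuous (fun z : EuclideanSpace ℝ (Fin (m + 1)) => Dlast m z t) := by
  have : (fun z : EuclideanSpace ℝ (Fin (m + 1)) => Dlast m z t)
      = fun z => -(heatK m z t) / (2 * t) * z (Fin.last m) := by
    funext z; exact Dlast_eq ht z
  rw [this]
  exact ((continuous_heatK.neg.div_const _).mul
    (EuclideanSpace.proj (Fin.last m) : EuclideanSpace ℝ (Fin (m + 1)) →L[ℝ] ℝ).continuous)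

lemma continuous_D2 :
    Continuous (fun z : EuclideanSpace ℝ (Fin (m + 1)) => D2 m z t) := by
  unfold D2
  exact (((((EuclideanSpace.proj (Fin.last m) : EuclideanSpace ℝ (Fin (m + 1)) →L[ℝ] ℝ
    ).continuous).pow 2).div_const _).sub continuous_const).mul continuous_heatK

lemma continuous_DK : Continuous (fun z : EuclideanSpace ℝ (Fin (m + 1)) => DK m t z) := by
  unfold DK
  exact (continuous_heatK.neg.div_const _).smul (innerSL ℝ :
    EuclideanSpace ℝ (Fin (m + 1)) →L⋆[ℝ] (EuclideanSpace ℝ (Fin (m + 1)) →L[ℝ] ℝ)).continuous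

lemma continuous_DDK : Continuous (fun z : EuclideanSpace ℝ (Fin (m + 1)) => DDK m t z) := by
  unfold DDK
  refine Continuous.smul (f := fun _ => (-(1:ℝ) / (2 * t))) continuous_const ?_
  exact (((EuclideanSpace.proj (Fin.last m) : EuclideanSpace ℝ (Fin (m + 1)) →L[ℝ] ℝ
    ).continuous).smul continuous_DK).add (continuous_heatK.smul continuous_const)

lemma hasDerivAt_line (z : EuclideanSpace ℝ (Fin (m + 1))) (τ : ℝ) :
    HasDerivAt (fun σ : ℝ => z + σ • EuclideanSpace.single (Fin.last m) (1:ℝ))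
      (EuclideanSpace.single (Fin.last m) (1:ℝ)) τ := by
  simpa using ((hasDerivAt_id τ).smul_const
    (EuclideanSpace.single (Fin.last m) (1:ℝ))).const_add z

lemma hasDerivAt_Dlast_line (ht : 0 < t) (z : EuclideanSpace ℝ (Fin (m + 1))) (τ : ℝ) :
    HasDerivAt (fun σ : ℝ => Dlast m (z + σ • EuclideanSpace.single (Fin.last m) 1) t)
      (D2 m (z + τ • EuclideanSpace.single (Fin.last m) 1) t) τ := by
  have h := (hasFDerivAt_Dlast ht (z + τ • EuclideanSpace.single (Fin.last m) 1)).comp_hasDerivAt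
    τ (hasDerivAt_line z τ)
  rwa [DDK_apply_e ht] at h

lemma integrableOn_exp_Dlast (ht : 0 < t) {a : ℝ} (ha : 0 < a)
    (z : EuclideanSpace ℝ (Fin (m + 1))) :
    IntegrableOn (fun τ : ℝ => Real.exp (-a * τ) *
      Dlast m (z + τ • EuclideanSpace.single (Fin.last m) 1) t) (Set.Ioi 0) := by
  apply Integrable.mono' ((exp_neg_integrableOn_Ioi 0 ha).const_mul (cst m t / Real.sqrt t))
  · apply Continuous.aestronglyMeasurable
    exact (Real.continuous_exp.comp (continuous_const.mul continuous_id)).mul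
      ((continuous_Dlast ht).comp (continuous_const.add (continuous_id.smul continuous_const)))
  · filter_upwards with τ
    rw [Real.norm_eq_abs, abs_mul, Real.abs_exp, mul_comm (cst m t / Real.sqrt t) _]
    exact mul_le_mul_of_nonneg_left (abs_Dlast_le ht _) (Real.exp_pos _).le

lemma integrableOn_exp_D2 (ht : 0 < t) {a : ℝ} (ha : 0 < a)
    (z : EuclideanSpace ℝ (Fin (m + 1))) :
    IntegrableOn (fun τ : ℝ => Real.exp (-a * τ) *
      D2 m (z + τ • EuclideanSpace.single (Fin.last m) 1) t) (Set.Ioi 0) := by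
  apply Integrable.mono' ((exp_neg_integrableOn_Ioi 0 ha).const_mul (3 * cst m t / (2 * t)))
  · apply Continuous.aestronglyMeasurable
    exact (Real.continuous_exp.comp (continuous_const.mul continuous_id)).mul
      (continuous_D2.comp (continuous_const.add (continuous_id.smul continuous_const)))
  · filter_upwards with τ
    rw [Real.norm_eq_abs, abs_mul, Real.abs_exp, mul_comm (3 * cst m t / (2 * t)) _]
    exact mul_le_mul_of_nonneg_left (abs_D2_le ht _) (Real.exp_pos _).le

lemma key_ftc (ht : 0 < t) {a : ℝ} (ha : 0 < a) (z : EuclideanSpace ℝ (Fin (m + 1))) :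
    ∫ τ in Set.Ioi (0:ℝ), Real.exp (-a * τ) *
        D2 m (z + τ • EuclideanSpace.single (Fin.last m) 1) t
      = -(Dlast m z t) + a * ∫ τ in Set.Ioi (0:ℝ), Real.exp (-a * τ) *
        Dlast m (z + τ • EuclideanSpace.single (Fin.last m) 1) t := by
  set f : ℝ → ℝ := fun τ => Real.exp (-a * τ) *
    Dlast m (z + τ • EuclideanSpace.single (Fin.last m) 1) t with hf
  set f' : ℝ → ℝ := fun τ => Real.exp (-a * τ) *
      D2 m (z + τ • EuclideanSpace.single (Fin.last m) 1) t
    - a * (Real.exp (-a * τ) * Dlast m (z + τ • EuclideanSpace.single (Fin.last m) 1) t)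
    with hf'
  have hderiv : ∀ τ ∈ Set.Ici (0:ℝ), HasDerivAt f (f' τ) τ := by
    intro τ _
    have h1 : HasDerivAt (fun σ : ℝ => Real.exp (-a * σ)) (-a * Real.exp (-a * τ)) τ := by
      simpa [mul_comm] using ((hasDerivAt_id τ).const_mul (-a)).exp
    have h2 := h1.mul (hasDerivAt_Dlast_line ht z τ)
    refine h2.congr_deriv ?_
    simp only [hf']
    ring
  have hint : IntegrableOn f' (Set.Ioi 0) := by
    exact (integrableOn_exp_D2 ht ha z).sub ((integrableOn_exp_Dlast ht ha z).const_mul a)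
  have htend : Filter.Tendsto f Filter.atTop (nhds 0) := by
    have hb : ∀ τ : ℝ, ‖f τ‖ ≤ cst m t / Real.sqrt t * Real.exp (-a * τ) := by
      intro τ
      rw [Real.norm_eq_abs, hf, abs_mul, Real.abs_exp, mul_comm (cst m t / Real.sqrt t) _]
      exact mul_le_mul_of_nonneg_left (abs_Dlast_le ht _) (Real.exp_pos _).le
    have hg : Filter.Tendsto (fun τ : ℝ => cst m t / Real.sqrt t * Real.exp (-a * τ))
        Filter.atTop (nhds 0) := by
      have h1 : Filter.Tendsto (fun τ : ℝ => Real.exp (-a * τ)) Filter.atTop (nhds 0) := by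
        have h2 : Filter.Tendsto (fun x : ℝ => a * x) Filter.atTop Filter.atTop :=
          Filter.Tendsto.const_mul_atTop ha
            (Filter.tendsto_id : Filter.Tendsto id Filter.atTop Filter.atTop)
        simpa using h2
      simpa using h1.const_mul (cst m t / Real.sqrt t)
    exact squeeze_zero_norm hb hg
  have h0 : f 0 = Dlast m z t := by
    simp [hf]
  have := integral_Ioi_of_hasDerivAt_of_tendsto' hderiv hint htend
  rw [h0] at this
  have hsplit : ∫ τ in Set.Ioi (0:ℝ), f' τ
      = (∫ τ in Set.Ioi (0:ℝ), Real.exp (-a * τ) *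
          D2 m (z + τ • EuclideanSpace.single (Fin.last m) 1) t)
        - a * ∫ τ in Set.Ioi (0:ℝ), Real.exp (-a * τ) *
          Dlast m (z + τ • EuclideanSpace.single (Fin.last m) 1) t := by
    rw [integral_sub (integrableOn_exp_D2 ht ha z)
      ((integrableOn_exp_Dlast ht ha z).const_mul a), MeasureTheory.integral_const_mul]
  rw [hsplit] at this
  linarith [this]

lemma integrableOn_exp_DDK (ht : 0 < t) {a : ℝ} (ha : 0 < a)
    (z : EuclideanSpace ℝ (Fin (m + 1))) :
    IntegrableOn (fun τ : ℝ => Real.exp (-a * τ) •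
      DDK m t (z + τ • EuclideanSpace.single (Fin.last m) 1)) (Set.Ioi 0) := by
  apply Integrable.mono' ((exp_neg_integrableOn_Ioi 0 ha).const_mul (3 * cst m t / (2 * t)))
  · apply Continuous.aestronglyMeasurable
    exact (Real.continuous_exp.comp (continuous_const.mul continuous_id)).smul
      (continuous_DDK.comp (continuous_const.add (continuous_id.smul continuous_const)))
  · filter_upwards with τ
    refine (norm_smul_le (Real.exp (-a * τ))
      (DDK m t (z + τ • EuclideanSpace.single (Fin.last m) 1))).trans ?_
    rw [Real.norm_eq_abs, Real.abs_exp, mul_comm (3 * cst m t / (2 * t)) _]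
    exact mul_le_mul_of_nonneg_left (norm_DDK_le ht _) (Real.exp_pos _).le

lemma hasFDerivAt_integral_term (ht : 0 < t) {a : ℝ} (ha : 0 < a)
    (w x₀ : EuclideanSpace ℝ (Fin (m + 1))) :
    HasFDerivAt (fun x => ∫ τ in Set.Ioi (0:ℝ), Real.exp (-a * τ) *
        Dlast m (x - w + τ • EuclideanSpace.single (Fin.last m) 1) t)
      (∫ τ in Set.Ioi (0:ℝ), Real.exp (-a * τ) •
        DDK m t (x₀ - w + τ • EuclideanSpace.single (Fin.last m) 1)) x₀ := by
  apply hasFDerivAt_integral_of_dominated_of_fderiv_le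
    (F' := fun x τ => Real.exp (-a * τ) •
      DDK m t (x - w + τ • EuclideanSpace.single (Fin.last m) 1))
    (bound := fun τ => 3 * cst m t / (2 * t) * Real.exp (-a * τ)) (s := Metric.ball x₀ 1) (Metric.ball_mem_nhds x₀ one_pos)
  · filter_upwards with x
    apply Continuous.aestronglyMeasurable
    exact (Real.continuous_exp.comp (continuous_const.mul continuous_id)).mul
      ((continuous_Dlast ht).comp (continuous_const.add (continuous_id.smul continuous_const)))
  · have h := integrableOn_exp_Dlast ht ha (x₀ - w)
    exact h
  · apply Continuous.aestronglyMeasurable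
    exact (Real.continuous_exp.comp (continuous_const.mul continuous_id)).smul
      (continuous_DDK.comp (continuous_const.add (continuous_id.smul continuous_const)))
  · filter_upwards with τ
    intro x _
    refine (norm_smul_le (Real.exp (-a * τ))
      (DDK m t (x - w + τ • EuclideanSpace.single (Fin.last m) 1))).trans ?_
    rw [Real.norm_eq_abs, Real.abs_exp, mul_comm (3 * cst m t / (2 * t)) _]
    exact mul_le_mul_of_nonneg_left (norm_DDK_le ht _) (Real.exp_pos _).le
  · exact (exp_neg_integrableOn_Ioi 0 ha).const_mul _
  · filter_upwards with τ
    intro x _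
    have hin : HasFDerivAt
        (fun x : EuclideanSpace ℝ (Fin (m + 1)) =>
          x - w + τ • EuclideanSpace.single (Fin.last m) 1)
        (ContinuousLinearMap.id ℝ (EuclideanSpace ℝ (Fin (m + 1)))) x :=
      ((hasFDerivAt_id x).sub_const w).add_const _
    have h := ((hasFDerivAt_Dlast ht
      (x - w + τ • EuclideanSpace.single (Fin.last m) 1)).comp x hin).const_mul
      (Real.exp (-a * τ))
    simpa using h

lemma DK_apply_e (ht : 0 < t) (z : EuclideanSpace ℝ (Fin (m + 1))) :
    DK m t z (EuclideanSpace.single (Fin.last m) 1) = Dlast m z t := by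
  rw [Dlast_eq ht z]
  simp [DK, EuclideanSpace.inner_single_right]

lemma integral_DDK_apply (ht : 0 < t) {a : ℝ} (ha : 0 < a)
    (z : EuclideanSpace ℝ (Fin (m + 1))) :
    (∫ τ in Set.Ioi (0:ℝ), Real.exp (-a * τ) •
        DDK m t (z + τ • EuclideanSpace.single (Fin.last m) 1))
      (EuclideanSpace.single (Fin.last m) 1)
    = ∫ τ in Set.Ioi (0:ℝ), Real.exp (-a * τ) *
        D2 m (z + τ • EuclideanSpace.single (Fin.last m) 1) t := by
  rw [ContinuousLinearMap.integral_apply (integrableOn_exp_DDK ht ha z)]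
  apply MeasureTheory.integral_congr_ae
  filter_upwards with τ
  rw [ContinuousLinearMap.smul_apply, DDK_apply_e ht, smul_eq_mul]


lemma norm_sub_reflect {x y : EuclideanSpace ℝ (Fin (m + 1))} (hx : x (Fin.last m) = 0) :
    ‖x - reflect y‖ = ‖x - y‖ := by
  rw [EuclideanSpace.norm_eq, EuclideanSpace.norm_eq]
  congr 1
  apply Finset.sum_congr rfl
  intro i _
  by_cases h : i = Fin.last m
  · subst h
    have h1 : (x - reflect y) (Fin.last m) = x (Fin.last m) - reflect y (Fin.last m) := rfl
    have h2 : (x - y) (Fin.last m) = x (Fin.last m) - y (Fin.last m) := rfl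
    rw [h1, h2, hx]
    simp [reflect]
  · have h1 : (x - reflect y) i = x i - reflect y i := rfl
    have h2 : (x - y) i = x i - y i := rfl
    rw [h1, h2]
    simp [reflect, h]

lemma heatK_reflect {x y : EuclideanSpace ℝ (Fin (m + 1))} (hx : x (Fin.last m) = 0) :
    heatK m (x - reflect y) t = heatK m (x - y) t := by
  unfold heatK
  rw [norm_sub_reflect hx]

lemma Dlast_add_reflect (ht : 0 < t) {x y : EuclideanSpace ℝ (Fin (m + 1))}
    (hx : x (Fin.last m) = 0) :
    Dlast m (x - y) t + Dlast m (x - reflect y) t = 0 := by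
  rw [Dlast_eq ht, Dlast_eq ht, heatK_reflect hx]
  have h1 : (x - reflect y) (Fin.last m) = x (Fin.last m) - reflect y (Fin.last m) := rfl
  have h2 : (x - y) (Fin.last m) = x (Fin.last m) - y (Fin.last m) := rfl
  rw [h1, h2, hx]
  simp [reflect]


/-- for every boundary point `x` (`x_{m+1} = 0`), `y ∈ ℝ^{m+1}_+` and `t > 0`,
the oblique boundary condition `∂_{x_{m+1}} G^ε(x,y,t) - (3/(4ε²)) G^ε(x,y,t) = 0` holds. -/
theorem stmt9 (m : ℕ) (ε : ℝ) (hε : 0 < ε)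
    (x y : EuclideanSpace ℝ (Fin (m + 1))) (t : ℝ)
    (hx : x (Fin.last m) = 0) (hy : 0 < y (Fin.last m)) (ht : 0 < t) :
    fderiv ℝ (Gve m ε y t) x (EuclideanSpace.single (Fin.last m) 1) -
        (3 / (4 * ε ^ 2)) * Gve m ε y t x = 0 := by
  set a : ℝ := 3 / (4 * ε ^ 2) with ha_def
  have ha : 0 < a := by positivity
  set e : EuclideanSpace ℝ (Fin (m + 1)) := EuclideanSpace.single (Fin.last m) 1 with he_def
  -- derivatives of the three pieces
  have h1 : HasFDerivAt (fun x : EuclideanSpace ℝ (Fin (m + 1)) => heatK m (x - y) t)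
      (DK m t (x - y)) x := by
    have h := (hasFDerivAt_heatK ht (x - y)).comp x ((hasFDerivAt_id x).sub_const y)
    simp at h; exact h
  have h2 : HasFDerivAt (fun x : EuclideanSpace ℝ (Fin (m + 1)) => heatK m (x - reflect y) t)
      (DK m t (x - reflect y)) x := by
    have h :=
      (hasFDerivAt_heatK ht (x - reflect y)).comp x ((hasFDerivAt_id x).sub_const (reflect y))
    simp at h; exact h
  have h3 := hasFDerivAt_integral_term ht ha (reflect y) x
  have hG : HasFDerivAt (Gve m ε y t)
      (DK m t (x - y) - DK m t (x - reflect y) -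
        (2:ℝ) • (∫ τ in Set.Ioi (0:ℝ), Real.exp (-a * τ) •
          DDK m t (x - reflect y + τ • e))) x := by
    exact (h1.sub h2).sub (h3.const_mul 2)
  rw [hG.fderiv]
  have happ : (DK m t (x - y) - DK m t (x - reflect y) -
      (2:ℝ) • (∫ τ in Set.Ioi (0:ℝ), Real.exp (-a * τ) •
        DDK m t (x - reflect y + τ • e))) e
      = Dlast m (x - y) t - Dlast m (x - reflect y) t -
        2 * ∫ τ in Set.Ioi (0:ℝ), Real.exp (-a * τ) * D2 m (x - reflect y + τ • e) t := by
    rw [ContinuousLinearMap.sub_apply, ContinuousLinearMap.sub_apply,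
      ContinuousLinearMap.smul_apply, DK_apply_e ht, DK_apply_e ht,
      integral_DDK_apply ht ha (x - reflect y), smul_eq_mul]
  rw [happ]
  have hftc := key_ftc ht ha (x - reflect y)
  have hGval : Gve m ε y t x = heatK m (x - y) t - heatK m (x - reflect y) t -
      2 * ∫ τ in Set.Ioi (0:ℝ), Real.exp (-a * τ) * Dlast m (x - reflect y + τ • e) t := rfl
  rw [hGval, heatK_reflect hx]
  have hDD := Dlast_add_reflect ht (y := y) hx
  set J : ℝ := ∫ τ in Set.Ioi (0:ℝ), Real.exp (-a * τ) * Dlast m (x - reflect y + τ • e) t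
  rw [hftc]
  linarith [hDD]
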